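/- In the symmetric model A(n,k) with uniform prior, for any signal s with x zeros and any box i, the conditional probability of no lock in box i given the whole signal vector equals the conditional probability given only the sign at box i and the total number of zeros: P(T_i = 0 | S = s, N = x) = P(T_i = 0 | S_i = s_i, N = x). -/

import Mathlib

open Finset

/-- Probability of signal vector `s` given lock position `γ` (symmetric testing
with sensitivity `a` and specificity `b`). -/
noncomputable def psg (n : ℕ) (a b : ℝ) (γ : Finset (Fin n)) (s : Fin n → Bool) : ℝ :=
  ∏ i : Fin n, if i ∈ γ then (if s i then a else 1 - a) else (if s i then 1 - b else b)

/-- Joint probability of the pair `(γ, s)` under the uniform prior on k-subsets. -/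
noncomputable def jointP (n k : ℕ) (a b : ℝ) (γ : Finset (Fin n)) (s : Fin n → Bool) : ℝ :=
  ((n.choose k : ℝ))⁻¹ * psg n a b γ s

/-- The number of minuses (zeros) in signal `s`. -/
def zeros (n : ℕ) (s : Fin n → Bool) : ℕ :=
  (Finset.univ.filter (fun i => s i = false)).card

/-- The set of possible lock positions: k-subsets of the n boxes. -/
def locksets (n k : ℕ) : Finset (Finset (Fin n)) :=
  Finset.powersetCard k Finset.univ

/-- Probability of observing signal vector `s` (uniform prior). -/
noncomputable def pS (n k : ℕ) (a b : ℝ) (s : Fin n → Bool) : ℝ :=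
  ∑ γ ∈ locksets n k, jointP n k a b γ s

/-- Probability that the number of minuses `N` equals `x` (uniform prior). -/
noncomputable def pN (n k : ℕ) (a b : ℝ) (x : ℕ) : ℝ :=
  ∑ s : Fin n → Bool, if zeros n s = x then pS n k a b s else 0

lemma exists_perm {α : Type*} [Fintype α] [DecidableEq α] (f g : α → Bool)
    (h : (univ.filter (fun x => f x = false)).card = (univ.filter (fun x => g x = false)).card) :
    ∃ σ : Equiv.Perm α, ∀ x, f x = g (σ x) := by
  classical
  have hc0 : Fintype.card {x // f x = false} = Fintype.card {x // g x = false} := by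
    simpa [Fintype.card_subtype] using h
  have hc1 : Fintype.card {x // ¬ f x = false} = Fintype.card {x // ¬ g x = false} := by
    rw [Fintype.card_subtype_compl, Fintype.card_subtype_compl, hc0]
  let e0 := Fintype.equivOfCardEq hc0
  let e1 := Fintype.equivOfCardEq hc1
  refine ⟨Equiv.subtypeCongr e0 e1, ?_⟩
  intro x
  by_cases hx : f x = false
  · rw [Equiv.subtypeCongr, Equiv.trans_apply, Equiv.trans_apply,
      Equiv.sumCompl_symm_apply_of_pos (p := fun x => f x = false) hx]
    simp only [Equiv.sumCongr_apply, Sum.map_inl, Equiv.sumCompl_apply_inl]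
    rw [hx, (e0 ⟨x, hx⟩).2]
  · rw [Equiv.subtypeCongr, Equiv.trans_apply, Equiv.trans_apply,
      Equiv.sumCompl_symm_apply_of_neg (p := fun x => f x = false) hx]
    simp only [Equiv.sumCongr_apply, Sum.map_inr, Equiv.sumCompl_apply_inr]
    have h2 := (e1 ⟨x, hx⟩).2
    simp only [Bool.not_eq_false] at hx h2
    rw [hx, h2]

lemma exists_perm_fix {n : ℕ} (i : Fin n) (s' s : Fin n → Bool)
    (hi : s' i = s i) (hz : zeros n s' = zeros n s) :
    ∃ σ : Equiv.Perm (Fin n), σ i = i ∧ ∀ j, s' j = s (σ j) := by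
  classical
  have key : ∀ t : Fin n → Bool,
      (univ.filter (fun x : {j : Fin n // j ≠ i} => t x.1 = false)).card
        = (if t i = false then (zeros n t) - 1 else zeros n t) := by
    intro t
    rw [← Fintype.card_subtype]
    rw [Fintype.card_congr (Equiv.subtypeSubtypeEquivSubtypeInter (fun j => j ≠ i) (fun j => t j = false))]
    rw [Fintype.card_subtype]
    have : (univ.filter fun j : Fin n => j ≠ i ∧ t j = false)
        = (univ.filter fun j : Fin n => t j = false).erase i := by
      rw [← filter_ne' _ i, filter_filter]
      apply filter_congr; intro j _; tauto
    rw [this, card_erase_eq_ite]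
    simp [zeros, mem_filter]
  obtain ⟨σ₀, hσ₀⟩ := exists_perm (fun x : {j : Fin n // j ≠ i} => s' x.1)
    (fun x : {j : Fin n // j ≠ i} => s x.1) (by rw [key, key, hi, hz])
  refine ⟨Equiv.Perm.subtypeCongr σ₀ (Equiv.refl {j : Fin n // ¬ j ≠ i}), ?_, ?_⟩
  · rw [Equiv.Perm.subtypeCongr.apply]
    simp
  · intro j
    rw [Equiv.Perm.subtypeCongr.apply]
    by_cases hj : j ≠ i
    · rw [dif_pos hj]
      exact hσ₀ ⟨j, hj⟩
    · rw [dif_neg hj]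
      push_neg at hj; subst hj; simpa using hi

lemma psg_map {n : ℕ} (a b : ℝ) (σ : Equiv.Perm (Fin n)) (γ : Finset (Fin n)) (s : Fin n → Bool) :
    psg n a b (γ.map σ.toEmbedding) s = psg n a b γ (fun j => s (σ j)) := by
  unfold psg
  rw [← Equiv.prod_comp σ (fun j => if j ∈ γ.map σ.toEmbedding then (if s j then a else 1 - a)
      else (if s j then 1 - b else b))]
  refine Finset.prod_congr rfl fun j _ => ?_
  have : σ j ∈ γ.map σ.toEmbedding ↔ j ∈ γ := by
    rw [Finset.mem_map_equiv]
    simp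
  simp only [this]

lemma sum_inv {n k : ℕ} (a b : ℝ) (σ : Equiv.Perm (Fin n)) (s : Fin n → Bool)
    (P : Finset (Fin n) → Prop) [DecidablePred P]
    (hP : ∀ γ, P (γ.map σ.toEmbedding) ↔ P γ) :
    (∑ γ ∈ locksets n k, if P γ then jointP n k a b γ (fun j => s (σ j)) else 0)
      = ∑ γ ∈ locksets n k, if P γ then jointP n k a b γ s else 0 := by
  classical
  have step : ∀ γ, (if P γ then jointP n k a b γ (fun j => s (σ j)) else 0)
      = (if P (γ.map σ.toEmbedding) then jointP n k a b (γ.map σ.toEmbedding) s else 0) := by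
    intro γ
    by_cases h : P γ
    · rw [if_pos h, if_pos ((hP γ).2 h), jointP, jointP, psg_map]
    · rw [if_neg h, if_neg (fun hc => h ((hP γ).1 hc))]
  rw [Finset.sum_congr rfl (fun γ _ => step γ)]
  refine Finset.sum_nbij' (fun γ => γ.map σ.toEmbedding) (fun γ => γ.map σ.symm.toEmbedding)
    ?_ ?_ ?_ ?_ ?_
  · intro γ hγ
    simp only [locksets, Finset.mem_powersetCard] at *
    exact ⟨Finset.subset_univ _, by rw [Finset.card_map]; exact hγ.2⟩
  · intro γ hγ
    simp only [locksets, Finset.mem_powersetCard] at *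
    exact ⟨Finset.subset_univ _, by rw [Finset.card_map]; exact hγ.2⟩
  · intro γ _
    ext j
    simp [Finset.mem_map_equiv]
  · intro γ _
    ext j
    simp [Finset.mem_map_equiv]
  · intro γ _
    rfl

/-- In the symmetric model A(n,k) with uniform prior, for a signal s with x zeros,
P(T_i = 0 | S = s, N = x) = P(T_i = 0 | S_i = s_i, N = x): the conditional
probability of no lock in box i given the whole signal vector equals the one
given only the sign at box i and the total number of zeros. -/
theorem stmt7 (n k x : ℕ) (hk : k ≤ n) (hx : x ≤ n) (a b : ℝ)
    (ha0 : 0 ≤ a) (ha1 : a ≤ 1) (hb0 : 0 ≤ b) (hb1 : b ≤ 1)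
    (i : Fin n) (s : Fin n → Bool) (hs : zeros n s = x)
    (h1 : 0 < pS n k a b s)
    (h2 : 0 < ∑ γ ∈ locksets n k, ∑ s' : Fin n → Bool,
        if s' i = s i ∧ zeros n s' = x then jointP n k a b γ s' else 0) :
    (∑ γ ∈ locksets n k, if i ∉ γ then jointP n k a b γ s else 0) / pS n k a b s =
      (∑ γ ∈ locksets n k, ∑ s' : Fin n → Bool,
          if i ∉ γ ∧ s' i = s i ∧ zeros n s' = x then jointP n k a b γ s' else 0) /
        (∑ γ ∈ locksets n k, ∑ s' : Fin n → Bool,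
          if s' i = s i ∧ zeros n s' = x then jointP n k a b γ s' else 0) := by
  classical
  set A := ∑ γ ∈ locksets n k, if i ∉ γ then jointP n k a b γ s else 0 with hA
  set D := pS n k a b s with hD
  -- For any s' in the class, get invariance.
  have keyA : ∀ s' : Fin n → Bool, s' i = s i → zeros n s' = x →
      (∑ γ ∈ locksets n k, if i ∉ γ then jointP n k a b γ s' else 0) = A := by
    intro s' h1' h2'
    obtain ⟨σ, hσi, hσ⟩ := exists_perm_fix i s' s h1' (h2'.trans hs.symm)
    have hs' : s' = fun j => s (σ j) := funext hσ
    rw [hs']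
    refine sum_inv a b σ s (fun γ => i ∉ γ) ?_
    intro γ
    rw [not_iff_not, Finset.mem_map_equiv]
    have : σ.symm i = i := by rw [Equiv.symm_apply_eq, hσi]
    rw [this]
  have keyB : ∀ s' : Fin n → Bool, s' i = s i → zeros n s' = x →
      pS n k a b s' = D := by
    intro s' h1' h2'
    obtain ⟨σ, hσi, hσ⟩ := exists_perm_fix i s' s h1' (h2'.trans hs.symm)
    have hs' : s' = fun j => s (σ j) := funext hσ
    rw [hs', hD]
    have := sum_inv (n := n) (k := k) a b σ s (fun _ => True) (fun _ => Iff.rfl)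
    simpa [pS] using this
  set c := ∑ s' : Fin n → Bool, if s' i = s i ∧ zeros n s' = x then (1 : ℝ) else 0 with hc
  -- Numerator of RHS equals c * A.
  have hnum : (∑ γ ∈ locksets n k, ∑ s' : Fin n → Bool,
      if i ∉ γ ∧ s' i = s i ∧ zeros n s' = x then jointP n k a b γ s' else 0) = c * A := by
    rw [Finset.sum_comm, hc, Finset.sum_mul]
    refine Finset.sum_congr rfl fun s' _ => ?_
    by_cases hC : s' i = s i ∧ zeros n s' = x
    · have : ∀ γ ∈ locksets n k, (if i ∉ γ ∧ s' i = s i ∧ zeros n s' = x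
          then jointP n k a b γ s' else 0) = (if i ∉ γ then jointP n k a b γ s' else 0) := by
        intro γ _
        by_cases h : i ∈ γ <;> simp [h, hC.1, hC.2]
      rw [Finset.sum_congr rfl this, keyA s' hC.1 hC.2, if_pos hC, one_mul]
    · have : ∀ γ ∈ locksets n k, (if i ∉ γ ∧ s' i = s i ∧ zeros n s' = x
          then jointP n k a b γ s' else 0) = 0 := by
        intro γ _
        rw [if_neg (fun h => hC h.2)]
      rw [Finset.sum_congr rfl this, Finset.sum_const_zero, if_neg hC, zero_mul]
  -- Denominator of RHS equals c * D.
  have hden : (∑ γ ∈ locksets n k, ∑ s' : Fin n → Bool,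
      if s' i = s i ∧ zeros n s' = x then jointP n k a b γ s' else 0) = c * D := by
    rw [Finset.sum_comm, hc, Finset.sum_mul]
    refine Finset.sum_congr rfl fun s' _ => ?_
    by_cases hC : s' i = s i ∧ zeros n s' = x
    · simp only [if_pos hC, one_mul]
      rw [← keyB s' hC.1 hC.2, pS]
    · simp only [if_neg hC, zero_mul, Finset.sum_const_zero]
  rw [hnum, hden]
  have hcD : 0 < c * D := by rw [← hden]; exact h2
  have hc0 : c ≠ 0 := by
    intro h
    rw [h, zero_mul] at hcD
    exact lt_irrefl 0 hcD
  rw [mul_div_mul_left A D hc0]
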